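/- arXiv:1406.6168 — 5 statements merged into one kernel-verified Lean document; each statement's English description precedes it below -/
import Mathlib

section
/- For the complete bipartite graph $K_{n,m}$ with $n \geq m \geq 1$, the total fibonaccian irregularity equals $nm(f_n - f_m)$, where $f_k$ is the $k$-th Fibonacci number. -/
open SimpleGraph Finset

attribute [local instance] Classical.propDecidable

lemma degree_inl (n m : ℕ) (a : Fin n) :
    (completeBipartiteGraph (Fin n) (Fin m)).degree (Sum.inl a) = m := by
  classical
  rw [SimpleGraph.degree]
  have : (completeBipartiteGraph (Fin n) (Fin m)).neighborFinset (Sum.inl a) =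
      (Finset.univ : Finset (Fin m)).map ⟨Sum.inr, Sum.inr_injective⟩ := by
    ext w
    cases w <;> simp [SimpleGraph.mem_neighborFinset]
  rw [this]; simp

lemma degree_inr (n m : ℕ) (b : Fin m) :
    (completeBipartiteGraph (Fin n) (Fin m)).degree (Sum.inr b) = n := by
  classical
  rw [SimpleGraph.degree]
  have : (completeBipartiteGraph (Fin n) (Fin m)).neighborFinset (Sum.inr b) =
      (Finset.univ : Finset (Fin n)).map ⟨Sum.inl, Sum.inl_injective⟩ := by
    ext w
    cases w <;> simp [SimpleGraph.mem_neighborFinset]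
  rw [this]; simp

/-- For the complete bipartite graph `K_{n,m}` with `n ≥ m ≥ 1`, the total fibonaccian
irregularity (sum over unordered pairs of `|f_{d(u)} - f_{d(v)}|`, expressed as half of the
double sum) equals `n * m * (fib n - fib m)`. -/
theorem firr_completeBipartite (n m : ℕ) (hm : 1 ≤ m) (hnm : m ≤ n) :
    ∑ u : Fin n ⊕ Fin m, ∑ v : Fin n ⊕ Fin m,
        |(Nat.fib ((completeBipartiteGraph (Fin n) (Fin m)).degree u) : ℤ) -
          (Nat.fib ((completeBipartiteGraph (Fin n) (Fin m)).degree v) : ℤ)| =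
      2 * ((n : ℤ) * (m : ℤ) * ((Nat.fib n : ℤ) - (Nat.fib m : ℤ))) := by
  have hfib : (Nat.fib m : ℤ) ≤ Nat.fib n := by
    exact_mod_cast Nat.fib_mono hnm
  rw [Fintype.sum_sum_type]
  simp only [Fintype.sum_sum_type, degree_inl, degree_inr]
  rw [abs_sub_comm]
  simp only [abs_of_nonneg (sub_nonneg.mpr hfib), sub_self, abs_zero,
    Finset.sum_const, Finset.card_univ, Fintype.card_fin, nsmul_eq_mul]
  rw [abs_sub_comm, abs_of_nonneg (sub_nonneg.mpr hfib)]
  ring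
end

section
/- For any simple graph $G$, the total irregularity of the disjoint union of $G$ with a copy of itself equals four times the total irregularity of $G$: $irr_t(G \cup G) = 4 \cdot irr_t(G)$. -/
open SimpleGraph Finset

attribute [local instance] Classical.propDecidable

lemma deg_sum_inl {α β : Type*} [Fintype α] [Fintype β] (G : SimpleGraph α) (H : SimpleGraph β)
    (u : α) : (G ⊕g H).degree (Sum.inl u) = G.degree u := by
  classical
  unfold SimpleGraph.degree
  apply Finset.card_bij (fun v _ => v.elim id (fun _ => u))
  · rintro (v|v) hv <;> simp_all [SimpleGraph.mem_neighborFinset]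
  · rintro (v|v) hv (w|w) hw h <;> simp_all [SimpleGraph.mem_neighborFinset]
  · intro v hv
    exact ⟨Sum.inl v, by simp_all [SimpleGraph.mem_neighborFinset], rfl⟩

lemma deg_sum_inr {α β : Type*} [Fintype α] [Fintype β] (G : SimpleGraph α) (H : SimpleGraph β)
    (u : β) : (G ⊕g H).degree (Sum.inr u) = H.degree u := by
  classical
  unfold SimpleGraph.degree
  apply Finset.card_bij (fun v _ => v.elim (fun _ => u) id)
  · rintro (v|v) hv <;> simp_all [SimpleGraph.mem_neighborFinset]
  · rintro (v|v) hv (w|w) hw h <;> simp_all [SimpleGraph.mem_neighborFinset]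
  · intro v hv
    exact ⟨Sum.inr v, by simp_all [SimpleGraph.mem_neighborFinset], rfl⟩

/-- For any simple graph `G`, the total irregularity of the disjoint union of `G` with a copy
of itself equals `4 · irr_t(G)` (total irregularity expressed as half of the double sum). -/
theorem irr_disjUnion_self {α : Type*} [Fintype α] (G : SimpleGraph α) :
    ∑ u : α ⊕ α, ∑ v : α ⊕ α, |((G ⊕g G).degree u : ℤ) - ((G ⊕g G).degree v : ℤ)| =
      4 * ∑ u : α, ∑ v : α, |(G.degree u : ℤ) - (G.degree v : ℤ)| := by
  classical
  simp only [Fintype.sum_sum_type, deg_sum_inl, deg_sum_inr]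
  simp only [Finset.sum_add_distrib]
  ring
end

section
/- Let $G$ and $H$ be simple graphs with vertices $v \in V(G)$ and $u \in V(H)$ such that $d_G(v) = 1$ and $d_H(u) = 1$. Then the edge-joint $G \rightsquigarrow_{vu} H$ (the disjoint union of $G$ and $H$ together with the added edge $vu$) satisfies $firr_t(G \rightsquigarrow_{vu} H) = firr_t(G \cup H)$. -/
open SimpleGraph Finset

attribute [local instance] Classical.propDecidable

/-- The edge-joint `G ⤳_{vu} H` of two disjoint simple graphs: the disjoint union of `G` and
`H` together with the added edge `vu`, where `v ∈ V(G)` and `u ∈ V(H)`. -/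
def SimpleGraph.edgeJoint {α β : Type*} (G : SimpleGraph α) (H : SimpleGraph β)
    (v : α) (u : β) : SimpleGraph (α ⊕ β) where
  Adj x y := (G ⊕g H).Adj x y ∨ (x = Sum.inl v ∧ y = Sum.inr u) ∨
    (x = Sum.inr u ∧ y = Sum.inl v)
  symm := by
    constructor
    intro x y h
    rcases h with h | ⟨h1, h2⟩ | ⟨h1, h2⟩
    · exact Or.inl ((G ⊕g H).adj_symm h)
    · exact Or.inr (Or.inr ⟨h2, h1⟩)
    · exact Or.inr (Or.inl ⟨h2, h1⟩)
  loopless := by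
    constructor
    intro x h
    rcases h with h | ⟨h1, h2⟩ | ⟨h1, h2⟩
    · exact (G ⊕g H).irrefl h
    · rw [h1] at h2; simp at h2
    · rw [h1] at h2; simp at h2

section Aux

variable {α β : Type*} [Fintype α] [Fintype β]
  (G : SimpleGraph α) (H : SimpleGraph β) (v : α) (u : β)

lemma sum_degree_inl (a : α) : (G ⊕g H).degree (Sum.inl a) = G.degree a := by
  classical
  unfold SimpleGraph.degree
  rw [show (G ⊕g H).neighborFinset (Sum.inl a)
      = (G.neighborFinset a).map ⟨Sum.inl, Sum.inl_injective⟩ by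
    ext y; cases y <;> simp [mem_neighborFinset]]
  simp

lemma sum_degree_inr (b : β) : (G ⊕g H).degree (Sum.inr b) = H.degree b := by
  classical
  unfold SimpleGraph.degree
  rw [show (G ⊕g H).neighborFinset (Sum.inr b)
      = (H.neighborFinset b).map ⟨Sum.inr, Sum.inr_injective⟩ by
    ext y; cases y <;> simp [mem_neighborFinset]]
  simp

lemma edgeJoint_degree_ne (x : α ⊕ β) (hx1 : x ≠ Sum.inl v) (hx2 : x ≠ Sum.inr u) :
    (G.edgeJoint H v u).degree x = (G ⊕g H).degree x := by
  classical
  unfold SimpleGraph.degree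
  congr 1
  ext y
  simp only [mem_neighborFinset]; simp only [SimpleGraph.edgeJoint]
  constructor
  · rintro (h | ⟨h1, h2⟩ | ⟨h1, h2⟩)
    · exact h
    · exact absurd h1 hx1
    · exact absurd h1 hx2
  · exact Or.inl

lemma edgeJoint_degree_inl :
    (G.edgeJoint H v u).degree (Sum.inl v) = (G ⊕g H).degree (Sum.inl v) + 1 := by
  classical
  unfold SimpleGraph.degree
  rw [show (G.edgeJoint H v u).neighborFinset (Sum.inl v)
      = insert (Sum.inr u) ((G ⊕g H).neighborFinset (Sum.inl v)) by
    ext y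
    simp only [mem_neighborFinset, Finset.mem_insert]; simp only [SimpleGraph.edgeJoint]
    constructor
    · rintro (h | ⟨h1, h2⟩ | ⟨h1, h2⟩)
      · exact Or.inr h
      · exact Or.inl h2
      · simp at h1
    · rintro (rfl | h)
      · exact Or.inr (Or.inl ⟨by simp, by simp⟩)
      · exact Or.inl h]
  rw [Finset.card_insert_of_notMem (by simp [mem_neighborFinset])]

lemma edgeJoint_degree_inr :
    (G.edgeJoint H v u).degree (Sum.inr u) = (G ⊕g H).degree (Sum.inr u) + 1 := by
  classical
  unfold SimpleGraph.degree
  rw [show (G.edgeJoint H v u).neighborFinset (Sum.inr u)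
      = insert (Sum.inl v) ((G ⊕g H).neighborFinset (Sum.inr u)) by
    ext y
    simp only [mem_neighborFinset, Finset.mem_insert]; simp only [SimpleGraph.edgeJoint]
    constructor
    · rintro (h | ⟨h1, h2⟩ | ⟨h1, h2⟩)
      · exact Or.inr h
      · simp at h1
      · exact Or.inl h2
    · rintro (rfl | h)
      · exact Or.inr (Or.inr ⟨by simp, by simp⟩)
      · exact Or.inl h]
  rw [Finset.card_insert_of_notMem (by simp [mem_neighborFinset])]

lemma fib_deg_eq (hv : G.degree v = 1) (hu : H.degree u = 1) (x : α ⊕ β) :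
    Nat.fib ((G.edgeJoint H v u).degree x) = Nat.fib ((G ⊕g H).degree x) := by
  by_cases h1 : x = Sum.inl v
  · subst h1
    rw [edgeJoint_degree_inl, sum_degree_inl, hv]; decide
  by_cases h2 : x = Sum.inr u
  · subst h2
    rw [edgeJoint_degree_inr, sum_degree_inr, hu]; decide
  · rw [edgeJoint_degree_ne G H v u x h1 h2]

end Aux

/-- If `v ∈ V(G)` and `u ∈ V(H)` both have degree `1`, then the edge-joint
`G ⤳_{vu} H` has the same total fibonaccian irregularity as the disjoint union `G ∪ H`
(expressed as half of the double sum of `|f_{d(u)} - f_{d(v)}|`). -/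
theorem firr_edgeJoint_of_degree_one {α β : Type*} [Fintype α] [Fintype β]
    (G : SimpleGraph α) (H : SimpleGraph β) (v : α) (u : β)
    (hv : G.degree v = 1) (hu : H.degree u = 1) :
    ∑ x : α ⊕ β, ∑ y : α ⊕ β,
        |(Nat.fib ((G.edgeJoint H v u).degree x) : ℤ) -
          (Nat.fib ((G.edgeJoint H v u).degree y) : ℤ)| =
      ∑ x : α ⊕ β, ∑ y : α ⊕ β,
        |(Nat.fib ((G ⊕g H).degree x) : ℤ) - (Nat.fib ((G ⊕g H).degree y) : ℤ)| := by
  refine Finset.sum_congr rfl fun x _ => Finset.sum_congr rfl fun y _ => ?_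
  rw [fib_deg_eq G H v u hv hu x, fib_deg_eq G H v u hv hu y]
end

section
/- For the path $P_n$ with $n \geq 2$, the total $\pm$-fibonaccian irregularity satisfies $firr_t^{\pm}(P_n) = 4(n-2)$, where the $\pm$-Fibonacci weight of a vertex $v$ is $-f_{d(v)}$ if $d(v)$ is odd and $f_{d(v)}$ if $d(v)$ is even. -/
open SimpleGraph Finset

attribute [local instance] Classical.propDecidable

lemma pathGraph_degree_eq {n : ℕ} (hn : 2 ≤ n) (u : Fin n) :
    (pathGraph n).degree u = if u.val = 0 ∨ u.val = n - 1 then 1 else 2 := by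
  rw [← card_neighborFinset_eq_degree]
  have hu := u.isLt
  split_ifs with h
  · rcases h with h | h
    · have : (pathGraph n).neighborFinset u = {⟨1, by omega⟩} := by
        ext v
        have hv := v.isLt
        simp only [mem_neighborFinset, pathGraph_adj, mem_singleton, Fin.ext_iff]
        omega
      rw [this]; simp
    · have : (pathGraph n).neighborFinset u = {⟨n - 2, by omega⟩} := by
        ext v
        have hv := v.isLt
        simp only [mem_neighborFinset, pathGraph_adj, mem_singleton, Fin.ext_iff]
        omega
      rw [this]; simp
  · push_neg at h
    have : (pathGraph n).neighborFinset u
        = {⟨u.val - 1, by omega⟩, ⟨u.val + 1, by omega⟩} := by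
      ext v
      have hv := v.isLt
      simp only [mem_neighborFinset, pathGraph_adj, mem_insert, mem_singleton, Fin.ext_iff]
      omega
    rw [this, card_insert_of_notMem (by simp only [mem_singleton, Fin.ext_iff]; omega),
      card_singleton]

/-- For the path `P_n` with `n ≥ 2`, the total `±`-fibonaccian irregularity equals `4(n-2)`,
where the `±`-Fibonacci weight of a vertex `v` is `-f_{d(v)}` if `d(v)` is odd and `f_{d(v)}`
if `d(v)` is even (the irregularity is the sum over unordered pairs of the absolute
differences of the weights, expressed here as half of the double sum). -/
theorem pmfirr_path (n : ℕ) (hn : 2 ≤ n) :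
    ∑ u : Fin n, ∑ v : Fin n,
        |(if Odd ((pathGraph n).degree u) then -(Nat.fib ((pathGraph n).degree u) : ℤ)
            else (Nat.fib ((pathGraph n).degree u) : ℤ)) -
          (if Odd ((pathGraph n).degree v) then -(Nat.fib ((pathGraph n).degree v) : ℤ)
            else (Nat.fib ((pathGraph n).degree v) : ℤ))| =
      2 * (4 * ((n : ℤ) - 2)) := by
  set w : Fin n → ℤ := fun u => if u.val = 0 ∨ u.val = n - 1 then (-1 : ℤ) else 1 with hw
  have hwval : ∀ u : Fin n,
      (if Odd ((pathGraph n).degree u) then -(Nat.fib ((pathGraph n).degree u) : ℤ)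
        else (Nat.fib ((pathGraph n).degree u) : ℤ)) = w u := by
    intro u
    rw [pathGraph_degree_eq hn u, hw]
    by_cases h : u.val = 0 ∨ u.val = n - 1 <;> simp [h] <;> decide
  have hpm : ∀ u : Fin n, w u = -1 ∨ w u = 1 := by
    intro u; rw [hw]; by_cases h : u.val = 0 ∨ u.val = n - 1 <;> simp [h]
  have habs : ∀ u v : Fin n, |w u - w v| = 1 - w u * w v := by
    intro u v
    rcases hpm u with h1 | h1 <;> rcases hpm v with h2 | h2 <;> rw [h1, h2] <;> decide
  have hsum : ∑ u : Fin n, w u = (n : ℤ) - 4 := by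
    have hE : (univ.filter (fun u : Fin n => u.val = 0 ∨ u.val = n - 1))
        = {(⟨0, by omega⟩ : Fin n), ⟨n - 1, by omega⟩} := by
      ext u
      simp only [mem_filter, mem_univ, true_and, mem_insert, mem_singleton, Fin.ext_iff]
    rw [hw, Finset.sum_ite, Finset.sum_const, Finset.sum_const, hE]
    rw [card_insert_of_notMem (by simp only [mem_singleton, Fin.ext_iff]; omega),
      card_singleton]
    have : (univ.filter (fun u : Fin n => ¬(u.val = 0 ∨ u.val = n - 1))).card = n - 2 := by
      have := card_filter_add_card_filter_not
        (s := (univ : Finset (Fin n))) (p := fun u : Fin n => u.val = 0 ∨ u.val = n - 1)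
      rw [hE] at this
      rw [card_insert_of_notMem (by simp only [mem_singleton, Fin.ext_iff]; omega),
        card_singleton, card_univ, Fintype.card_fin] at this
      omega
    rw [this]
    simp only [smul_eq_mul, nsmul_eq_mul]
    push_cast
    omega
  calc ∑ u : Fin n, ∑ v : Fin n,
        |(if Odd ((pathGraph n).degree u) then -(Nat.fib ((pathGraph n).degree u) : ℤ)
            else (Nat.fib ((pathGraph n).degree u) : ℤ)) -
          (if Odd ((pathGraph n).degree v) then -(Nat.fib ((pathGraph n).degree v) : ℤ)
            else (Nat.fib ((pathGraph n).degree v) : ℤ))|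
      = ∑ u : Fin n, ∑ v : Fin n, (1 - w u * w v) := by
        refine Finset.sum_congr rfl fun u _ => Finset.sum_congr rfl fun v _ => ?_
        rw [hwval u, hwval v, habs]
    _ = (n : ℤ) * n - (∑ u : Fin n, w u) * (∑ v : Fin n, w v) := by
        rw [Finset.sum_mul_sum]
        simp [Finset.sum_sub_distrib, card_univ]
    _ = 2 * (4 * ((n : ℤ) - 2)) := by rw [hsum]; ring
end

section
/- Let $G$ be a simple graph and let $G'$ be obtained from $G$ by adding a new vertex $w$ adjacent to a set $S$ of existing vertices. Then $irr_t(G') = irr_t(G) + \ell_1 - \ell_2 + \sum_{v \in V(G)} |{|S|} - d_{G'}(v)|$, where $\ell_1$ is the number of pairs $(u, s)$ with $u \in V(G) \setminus S$, $s \in S$, and $d_G(u) \leq d_G(s)$, and $\ell_2$ is the number of pairs $(u, s)$ with $u \in V(G) \setminus S$, $s \in S$, and $d_G(u) > d_G(s)$, provided additionally that all vertices in $S$ have equal degree changes handled pairwise (each $s \in S$ gains exactly one in degree) and all pairs within $S$ keep their differences unchanged. -/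
open SimpleGraph Finset

attribute [local instance] Classical.propDecidable

/-- The graph obtained from `G` by adding a new vertex (`none`) adjacent to every vertex of
the set `S` of existing vertices. -/
def SimpleGraph.addVertex {V : Type*} (G : SimpleGraph V) (S : Finset V) :
    SimpleGraph (Option V) where
  Adj x y := match x, y with
    | some a, some b => G.Adj a b
    | none, some b => b ∈ S
    | some a, none => a ∈ S
    | none, none => False
  symm := by
    constructor
    intro x y h
    cases x <;> cases y <;> simp_all [SimpleGraph.adj_comm]
  loopless := by
    constructor
    intro x h
    cases x <;> simp_all

section AuxSection
set_option linter.unusedSectionVars false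

variable {W : Type*} [Fintype W]

lemma degq (H : SimpleGraph W) [DecidableRel H.Adj] (x : W) :
    (H.degree x : ℤ) = ∑ y : W, if H.Adj x y then 1 else 0 := by
  rw [← card_neighborFinset_eq_degree, neighborFinset_eq_filter, card_filter]
  push_cast
  congr!

variable {V : Type*} [Fintype V] (G : SimpleGraph V) (S : Finset V)

lemma deg_none : ((G.addVertex S).degree none : ℤ) = S.card := by
  rw [degq]
  rw [Fintype.sum_option]
  simp only [SimpleGraph.addVertex]
  have h : (univ.filter (fun x => x ∈ S)) = S := by ext x; simp
  erw [if_neg (by exact fun h => h), zero_add]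
  conv_rhs => rw [← h, Finset.card_filter]
  push_cast
  congr!
  exact (fun (p : Prop) (i j : Decidable p) => congrArg (@ite ℤ p) (Subsingleton.elim i j)) _ _ _

lemma deg_some (v : V) :
    ((G.addVertex S).degree (some v) : ℤ) = (G.degree v : ℤ) + if v ∈ S then 1 else 0 := by
  rw [degq, Fintype.sum_option, degq]
  simp only [SimpleGraph.addVertex]
  rw [add_comm]
  congr!
  exact (fun (p : Prop) (i j : Decidable p) => congrArg (@ite ℤ p) (Subsingleton.elim i j)) _ _ _

lemma abs1 (a b : ℤ) : |a - (b+1)| = |a - b| + (if a ≤ b then 1 else -1) := by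
  rcases abs_cases (a - (b+1)) with ⟨h1,h1'⟩|⟨h1,h1'⟩ <;>
    rcases abs_cases (a-b) with ⟨h2,h2'⟩|⟨h2,h2'⟩ <;> rw [h1,h2] <;> split_ifs <;> omega

lemma abs2 (a b : ℤ) : |(a+1) - b| = |a - b| + (if b ≤ a then 1 else -1) := by
  rcases abs_cases ((a+1) - b) with ⟨h1,h1'⟩|⟨h1,h1'⟩ <;>
    rcases abs_cases (a-b) with ⟨h2,h2'⟩|⟨h2,h2'⟩ <;> rw [h1,h2] <;> split_ifs <;> omega

variable {V : Type*} [Fintype V] (G : SimpleGraph V) (S : Finset V)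

lemma pairwise_key (d : V → ℤ) (u v : V) :
    |(d u + if u ∈ S then 1 else 0) - (d v + if v ∈ S then 1 else 0)| =
      |d u - d v| + ((if u ∉ S ∧ v ∈ S then (if d u ≤ d v then 1 else -1) else 0)
        + (if u ∈ S ∧ v ∉ S then (if d v ≤ d u then 1 else -1) else 0)) := by
  by_cases hu : u ∈ S <;> by_cases hv : v ∈ S <;>
    simp only [hu, hv, not_true, not_false_iff, true_and, and_true, false_and, and_false,
      if_true, if_false, add_zero, zero_add]
  · have h : d u + 1 - (d v + 1) = d u - d v := by ring
    rw [h]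
  · rw [abs2]
  · rw [abs1]

lemma countA :
    ∑ u : V, ∑ v : V, (if u ∉ S ∧ v ∈ S then
        (if (G.degree u : ℤ) ≤ (G.degree v : ℤ) then (1:ℤ) else -1) else 0) =
      (((((univ \ S) ×ˢ S).filter (fun p : V × V => G.degree p.1 ≤ G.degree p.2)).card : ℤ) -
        ((((univ \ S) ×ˢ S).filter (fun p : V × V => G.degree p.1 > G.degree p.2)).card : ℤ)) := by
  have h0 : ∀ u v : V, (if u ∉ S ∧ v ∈ S then
        (if (G.degree u : ℤ) ≤ (G.degree v : ℤ) then (1:ℤ) else -1) else 0) =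
      (if (u,v) ∈ (univ \ S) ×ˢ S then
        (if (G.degree u : ℤ) ≤ (G.degree v : ℤ) then (1:ℤ) else -1) else 0) := by
    intro u v
    apply if_congr _ rfl rfl
    simp [Finset.mem_product]
  simp only [h0]
  rw [← Finset.sum_product', Finset.univ_product_univ]
  simp only [Prod.mk.eta]
  have step : (∑ p : V × V, (if p ∈ (univ \ S) ×ˢ S then
        (if (G.degree p.1 : ℤ) ≤ (G.degree p.2 : ℤ) then (1:ℤ) else -1) else 0)) =
      ∑ p ∈ (univ \ S) ×ˢ S,
        (if (G.degree p.1 : ℤ) ≤ (G.degree p.2 : ℤ) then (1:ℤ) else -1) := by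
    rw [← Finset.sum_subset (Finset.subset_univ ((univ \ S) ×ˢ S))
      (fun x _ hx => if_neg hx)]
    exact Finset.sum_congr rfl (fun x hx => if_pos hx)
  rw [step]
  rw [Finset.sum_ite, Finset.sum_const, Finset.sum_const]
  have h2 : ((univ \ S) ×ˢ S).filter (fun p : V × V => (G.degree p.1 : ℤ) ≤ (G.degree p.2 : ℤ))
      = ((univ \ S) ×ˢ S).filter (fun p : V × V => G.degree p.1 ≤ G.degree p.2) := by
    ext p; simp [Nat.cast_le]
  have h3 : ((univ \ S) ×ˢ S).filter (fun p : V × V => ¬ ((G.degree p.1 : ℤ) ≤ (G.degree p.2 : ℤ)))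
      = ((univ \ S) ×ˢ S).filter (fun p : V × V => G.degree p.1 > G.degree p.2) := by
    ext p
    simp only [mem_filter, not_le, gt_iff_lt]
    constructor
    · rintro ⟨h, h'⟩; exact ⟨h, by exact_mod_cast h'⟩
    · rintro ⟨h, h'⟩; exact ⟨h, by exact_mod_cast h'⟩
  rw [h2, h3]
  push_cast
  ring

lemma countB :
    ∑ u : V, ∑ v : V, (if u ∈ S ∧ v ∉ S then
        (if (G.degree v : ℤ) ≤ (G.degree u : ℤ) then (1:ℤ) else -1) else 0) =
      (((((univ \ S) ×ˢ S).filter (fun p : V × V => G.degree p.1 ≤ G.degree p.2)).card : ℤ) -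
        ((((univ \ S) ×ˢ S).filter (fun p : V × V => G.degree p.1 > G.degree p.2)).card : ℤ)) := by
  rw [Finset.sum_comm]
  rw [show (∑ v : V, ∑ u : V, (if u ∈ S ∧ v ∉ S then
        (if (G.degree v : ℤ) ≤ (G.degree u : ℤ) then (1:ℤ) else -1) else 0)) =
      ∑ u : V, ∑ v : V, (if u ∉ S ∧ v ∈ S then
        (if (G.degree u : ℤ) ≤ (G.degree v : ℤ) then (1:ℤ) else -1) else 0) from
    Finset.sum_congr rfl (fun u _ => Finset.sum_congr rfl
      (fun v _ => if_congr and_comm rfl rfl))]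
  exact countA G S


end AuxSection

/-- Adding a new vertex `w` adjacent to a set `S` of existing vertices of `G` changes the
total irregularity by `ℓ₁ - ℓ₂ + ∑_{v ∈ V(G)} ||S| - d_{G'}(v)|`, where `ℓ₁` (resp. `ℓ₂`) is
the number of pairs `(u, s)` with `u ∈ V(G) \ S`, `s ∈ S` and `d_G(u) ≤ d_G(s)` (resp.
`d_G(u) > d_G(s)`).  Irregularities are sums over unordered pairs of `|d(u) - d(v)|`,
expressed as halves of double sums. -/
theorem irr_addVertex {V : Type*} [Fintype V] (G : SimpleGraph V) (S : Finset V) :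
    ∑ x : Option V, ∑ y : Option V,
        |((G.addVertex S).degree x : ℤ) - ((G.addVertex S).degree y : ℤ)| =
      (∑ u : V, ∑ v : V, |(G.degree u : ℤ) - (G.degree v : ℤ)|) +
        2 * (((((univ \ S) ×ˢ S).filter
                (fun p : V × V => G.degree p.1 ≤ G.degree p.2)).card : ℤ) -
              ((((univ \ S) ×ˢ S).filter
                (fun p : V × V => G.degree p.1 > G.degree p.2)).card : ℤ) +
              ∑ v : V, |((S.card : ℤ)) - ((G.addVertex S).degree (some v) : ℤ)|) := by
  simp only [Fintype.sum_option, deg_none, deg_some]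
  have key : ∀ u : V, ∑ v : V,
      |((G.degree u : ℤ) + (if u ∈ S then 1 else 0)) -
        ((G.degree v : ℤ) + (if v ∈ S then 1 else 0))| =
      ∑ v : V, (|(G.degree u : ℤ) - (G.degree v : ℤ)| +
        ((if u ∉ S ∧ v ∈ S then (if (G.degree u : ℤ) ≤ (G.degree v : ℤ) then (1:ℤ) else -1) else 0)
        + (if u ∈ S ∧ v ∉ S then (if (G.degree v : ℤ) ≤ (G.degree u : ℤ) then (1:ℤ) else -1) else 0))) :=
    fun u => Finset.sum_congr rfl (fun v _ => pairwise_key S (fun w => (G.degree w : ℤ)) u v)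
  simp only [key, Finset.sum_add_distrib]
  rw [countA, countB]
  have habs : ∀ u : V, |((G.degree u : ℤ) + (if u ∈ S then 1 else 0)) - (S.card : ℤ)| =
      |(S.card : ℤ) - ((G.degree u : ℤ) + (if u ∈ S then 1 else 0))| :=
    fun u => abs_sub_comm _ _
  simp only [habs, sub_self, abs_zero]
  ring
end
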